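/- Let P ≥ 1 be an integer and m ∈ (-1,1), ρₒ ∈ ℝ. Let M̄ ∈ ℝ^{P×P} be the strictly upper-triangular matrix with M̄_{ij} = m for i < j and 0 otherwise, and let C^{out} = ρₒ𝟙𝟙ᵀ + (1-ρₒ)I. Then for all 1 ≤ i, j ≤ P, [C^{out}(I + M̄)^{-1}]_{ij} = ρₒ(1-m)^{j-1} + (1-ρₒ)δ_{ij} - (1-ρₒ)m·[j > i]·(1-m)^{j-i-1}, where [j > i] equals 1 if j > i and 0 otherwise. -/
import Mathlib


open Matrix BigOperators

/-- `M̄`: the strictly upper-triangular matrix whose entries above the diagonal all equal `m`. -/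
noncomputable def Mbar (P : ℕ) (m : ℝ) : Matrix (Fin P) (Fin P) ℝ :=
  Matrix.of fun i j => if (i : ℕ) < (j : ℕ) then m else 0

/-- `C^out = ρₒ 𝟙𝟙ᵀ + (1-ρₒ) I`. -/
noncomputable def Cout (P : ℕ) (ρo : ℝ) : Matrix (Fin P) (Fin P) ℝ :=
  Matrix.of (fun _ _ => ρo) + (1 - ρo) • (1 : Matrix (Fin P) (Fin P) ℝ)

/-- Explicit inverse of `1 + M̄`. -/
noncomputable def Binv (P : ℕ) (m : ℝ) : Matrix (Fin P) (Fin P) ℝ :=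
  Matrix.of fun i j =>
    (if i = j then (1:ℝ) else 0)
      - m * (if (i:ℕ) < (j:ℕ) then (1:ℝ) else 0) * (1-m) ^ ((j:ℕ) - (i:ℕ) - 1)

lemma mgeom (m : ℝ) (n : ℕ) :
    m * ∑ t ∈ Finset.range n, (1-m)^t = 1 - (1-m)^n := by
  linear_combination -(geom_sum_mul (1-m) n)

lemma sum_reflect (m : ℝ) (k : ℕ) :
    ∑ j ∈ Finset.range k, (1-m)^(k-j-1) = ∑ t ∈ Finset.range k, (1-m)^t := by
  have h := Finset.sum_range_reflect (fun t => (1-m)^t) k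
  rw [← h]
  refine Finset.sum_congr rfl fun j hj => ?_
  congr 1
  omega

lemma sum_ind (m : ℝ) (P k : ℕ) (hk : k ≤ P) :
    ∑ j ∈ Finset.range P, (if j < k then (1:ℝ) else 0) * (1-m)^(k-j-1)
      = ∑ t ∈ Finset.range k, (1-m)^t := by
  rw [← sum_reflect m k]
  rw [← Finset.sum_subset (Finset.range_subset_range.mpr hk)
    (f := fun j => (if j < k then (1:ℝ) else 0) * (1-m)^(k-j-1))
    (fun x _ hx => by
      simp only [Finset.mem_range, not_lt] at hx
      simp [Nat.not_lt.mpr hx])]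
  refine Finset.sum_congr rfl fun j hj => ?_
  simp [Finset.mem_range.mp hj]

lemma sum_ind2 (m : ℝ) (P i k : ℕ) (hk : k ≤ P) :
    ∑ j ∈ Finset.range P,
      (if i < j then (1:ℝ) else 0) * ((if j < k then (1:ℝ) else 0) * (1-m)^(k-j-1))
      = ∑ t ∈ Finset.range (k - i - 1), (1-m)^t := by
  have hsub : Finset.Ico (i+1) k ⊆ Finset.range P := by
    intro x hx
    simp only [Finset.mem_Ico] at hx
    exact Finset.mem_range.mpr (lt_of_lt_of_le hx.2 hk)
  rw [← Finset.sum_subset hsub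
    (f := fun j => (if i < j then (1:ℝ) else 0) * ((if j < k then (1:ℝ) else 0) * (1-m)^(k-j-1)))
    (fun x _ hx => by
      simp only [Finset.mem_Ico, not_and_or, not_le, not_lt] at hx
      rcases hx with h | h
      · simp [Nat.not_lt.mpr (Nat.lt_succ_iff.mp h)]
      · simp [Nat.not_lt.mpr h])]
  have h1 : ∑ j ∈ Finset.Ico (i+1) k,
      (if i < j then (1:ℝ) else 0) * ((if j < k then (1:ℝ) else 0) * (1-m)^(k-j-1))
      = ∑ j ∈ Finset.Ico (i+1) k, (1-m)^(k-j-1) := by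
    refine Finset.sum_congr rfl fun j hj => ?_
    simp only [Finset.mem_Ico] at hj
    simp [hj.1, hj.2, Nat.lt_of_succ_le hj.1]
  rw [h1, Finset.sum_Ico_eq_sum_range]
  rw [← Finset.sum_range_reflect (fun t => (1-m)^t) (k - i - 1)]
  refine Finset.sum_congr (by rw [Nat.sub_sub]) fun j hj => ?_
  congr 1
  simp only [Finset.mem_range] at hj
  omega

lemma key_nat (m : ℝ) (P i k : ℕ) (hi : i < P) (hk : k < P) :
    ∑ j ∈ Finset.range P,
      (((if i = j then (1:ℝ) else 0) + (if i < j then m else 0)) *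
        ((if j = k then (1:ℝ) else 0)
          - m * (if j < k then (1:ℝ) else 0) * (1-m) ^ (k - j - 1)))
      = if i = k then 1 else 0 := by
  have expand : ∀ j, (((if i = j then (1:ℝ) else 0) + (if i < j then m else 0)) *
        ((if j = k then (1:ℝ) else 0)
          - m * (if j < k then (1:ℝ) else 0) * (1-m) ^ (k - j - 1)))
      = (if i = j then (1:ℝ) else 0) * (if j = k then (1:ℝ) else 0)
        - m * ((if i = j then (1:ℝ) else 0) * ((if j < k then (1:ℝ) else 0) * (1-m) ^ (k - j - 1)))
        + m * ((if i < j then (1:ℝ) else 0) * (if j = k then (1:ℝ) else 0))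
        - m * (m * ((if i < j then (1:ℝ) else 0) * ((if j < k then (1:ℝ) else 0) * (1-m) ^ (k - j - 1)))) := by
    intro j
    split_ifs <;> ring
  simp only [expand]
  rw [Finset.sum_sub_distrib, Finset.sum_add_distrib, Finset.sum_sub_distrib,
    ← Finset.mul_sum, ← Finset.mul_sum, ← Finset.mul_sum, ← Finset.mul_sum]
  have S1 : ∑ j ∈ Finset.range P,
      (if i = j then (1:ℝ) else 0) * (if j = k then (1:ℝ) else 0)
      = if i = k then 1 else 0 := by
    rw [Finset.sum_eq_single i]
    · simp
    · intro b _ hb; simp [Ne.symm hb]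
    · intro h; exact absurd (Finset.mem_range.mpr hi) h
  have S2 : ∑ j ∈ Finset.range P,
      (if i = j then (1:ℝ) else 0) * ((if j < k then (1:ℝ) else 0) * (1-m) ^ (k - j - 1))
      = (if i < k then (1:ℝ) else 0) * (1-m) ^ (k - i - 1) := by
    rw [Finset.sum_eq_single i]
    · simp
    · intro b _ hb; simp [Ne.symm hb]
    · intro h; exact absurd (Finset.mem_range.mpr hi) h
  have S3 : ∑ j ∈ Finset.range P,
      (if i < j then (1:ℝ) else 0) * (if j = k then (1:ℝ) else 0)
      = if i < k then (1:ℝ) else 0 := by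
    rw [Finset.sum_eq_single k]
    · simp
    · intro b _ hb; simp [hb]
    · intro h; exact absurd (Finset.mem_range.mpr hk) h
  rw [S1, S2, S3, sum_ind2 m P i k hk.le]
  rcases lt_trichotomy i k with h | h | h
  · simp only [if_pos h, if_neg (Nat.ne_of_lt h)]
    linear_combination (-m) * mgeom m (k - i - 1)
  · subst h
    simp
  · have hn : ¬ i < k := not_lt.mpr h.le
    have hz : k - i - 1 = 0 := by omega
    simp [hn, Nat.ne_of_gt h, hz]

lemma Binv_is_inv (P : ℕ) (m : ℝ) :
    (1 + Mbar P m) * Binv P m = 1 := by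
  ext i k
  rw [Matrix.mul_apply]
  simp only [Matrix.add_apply, Mbar, Binv, Matrix.of_apply, Matrix.one_apply, Fin.ext_iff]
  rw [Fin.sum_univ_eq_sum_range (fun j =>
    (((if (i:ℕ) = j then (1:ℝ) else 0) + (if (i:ℕ) < j then m else 0)) *
        ((if j = (k:ℕ) then (1:ℝ) else 0)
          - m * (if j < (k:ℕ) then (1:ℝ) else 0) * (1-m) ^ ((k:ℕ) - j - 1))))]
  exact key_nat m P i k i.isLt k.isLt

lemma key2 (m ρo : ℝ) (P i k : ℕ) (hi : i < P) (hk : k < P) :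
    ∑ j ∈ Finset.range P,
      ((ρo + (1-ρo) * (if i = j then (1:ℝ) else 0)) *
        ((if j = k then (1:ℝ) else 0)
          - m * (if j < k then (1:ℝ) else 0) * (1-m) ^ (k - j - 1)))
      = ρo * (1-m)^k + (1-ρo) * (if i = k then (1:ℝ) else 0)
        - (1-ρo) * m * (if i < k then (1:ℝ) else 0) * (1-m)^(k-i-1) := by
  have expand : ∀ j, ((ρo + (1-ρo) * (if i = j then (1:ℝ) else 0)) *
        ((if j = k then (1:ℝ) else 0)
          - m * (if j < k then (1:ℝ) else 0) * (1-m) ^ (k - j - 1)))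
      = ρo * ((if j = k then (1:ℝ) else 0))
        - ρo * m * ((if j < k then (1:ℝ) else 0) * (1-m) ^ (k - j - 1))
        + (1-ρo) * ((if i = j then (1:ℝ) else 0) *
            ((if j = k then (1:ℝ) else 0)
              - m * (if j < k then (1:ℝ) else 0) * (1-m) ^ (k - j - 1))) := by
    intro j; ring
  simp only [expand]
  rw [Finset.sum_add_distrib, Finset.sum_sub_distrib,
    ← Finset.mul_sum, ← Finset.mul_sum, ← Finset.mul_sum]
  have T1 : ∑ j ∈ Finset.range P, (if j = k then (1:ℝ) else 0) = 1 := by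
    rw [Finset.sum_eq_single k]
    · simp
    · intro b _ hb; simp [hb]
    · intro h; exact absurd (Finset.mem_range.mpr hk) h
  have T2 : ∑ j ∈ Finset.range P, (if j < k then (1:ℝ) else 0) * (1-m) ^ (k - j - 1)
      = ∑ t ∈ Finset.range k, (1-m)^t := sum_ind m P k hk.le
  have T3 : ∑ j ∈ Finset.range P, ((if i = j then (1:ℝ) else 0) *
      ((if j = k then (1:ℝ) else 0)
        - m * (if j < k then (1:ℝ) else 0) * (1-m) ^ (k - j - 1)))
      = (if i = k then (1:ℝ) else 0)
        - m * (if i < k then (1:ℝ) else 0) * (1-m) ^ (k - i - 1) := by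
    rw [Finset.sum_eq_single i]
    · simp
    · intro b _ hb; simp [Ne.symm hb]
    · intro h; exact absurd (Finset.mem_range.mpr hi) h
  rw [T1, T2, T3]
  linear_combination (-ρo) * mgeom m k

/-- Entrywise formula for `C^out (I + M̄)⁻¹`:
`[C^out (I + M̄)⁻¹]_{ij} = ρₒ (1-m)^{j-1} + (1-ρₒ) δ_{ij} - (1-ρₒ) m [j > i] (1-m)^{j-i-1}`
(indices are one-based in the informal statement; here `i, j : Fin P` are zero-based,
so e.g. the one-based exponent `j - 1` is `(j : ℕ)`). -/
theorem Cout_mul_inv_entry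
    (P : ℕ) (hP : 1 ≤ P) (m : ℝ) (hm : -1 < m) (hm' : m < 1) (ρo : ℝ) :
    ∀ i j : Fin P,
      ((Cout P ρo * (1 + Mbar P m)⁻¹ : Matrix (Fin P) (Fin P) ℝ)) i j =
        ρo * (1 - m) ^ (j : ℕ)
          + (1 - ρo) * (if i = j then (1 : ℝ) else 0)
          - (1 - ρo) * m * (if (i : ℕ) < (j : ℕ) then (1 : ℝ) else 0) *
            (1 - m) ^ ((j : ℕ) - (i : ℕ) - 1) := by
  intro i k
  have hinv : (1 + Mbar P m)⁻¹ = Binv P m :=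
    Matrix.inv_eq_right_inv (Binv_is_inv P m)
  rw [hinv, Matrix.mul_apply]
  simp only [Cout, Binv, Matrix.add_apply, Matrix.of_apply, Matrix.smul_apply,
    Matrix.one_apply, smul_eq_mul, mul_one, Fin.ext_iff]
  rw [Fin.sum_univ_eq_sum_range (fun j =>
    ((ρo + (1-ρo) * (if (i:ℕ) = j then (1:ℝ) else 0)) *
        ((if j = (k:ℕ) then (1:ℝ) else 0)
          - m * (if j < (k:ℕ) then (1:ℝ) else 0) * (1-m) ^ ((k:ℕ) - j - 1))))]
  exact key2 m ρo P i k i.isLt k.isLt
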